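/- Let {π^{[a,b]}}_{0≤a,b≤N−1} be partitions and define, for fixed subsets I_2 ⊆ ℤ/N and S a set of cyclic intervals, T − B := Σ of the differences listed in the seven cases of Lemma (dif). Then T − B = −(1/2) Σ_{i∈I_2} ( Σ_{b≠i} l(π^{[i+1,b]}) − Σ_{c≠i+1} l(π^{[c,i]}) )² − (1/2) Σ_{[a,b]∈S} Σ_{l≥1} (b_l^{a,b})², using the identities M(π,ρ) − M(π',ρ') = l(π)l(ρ) and M(π,π) − M(π',π) = (1/2)l(π)² + (1/2)Σ_l b_l². -/

import Mathlib

open Finset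

namespace Stmt19

/-- The pairing `M(π,ρ) = Σ_{i ≥ 1} (Σ_{j ≥ i} b_j)(Σ_{j ≥ i} c_j)` on partitions in
multiplicity notation (all multiplicities vanishing above `D`). -/
def Mq (D : ℕ) (b c : ℕ → ℕ) : ℚ :=
  ∑ i ∈ Icc 1 D, (∑ j ∈ Icc i D, (b j : ℚ)) * (∑ j ∈ Icc i D, (c j : ℚ))

/-- The operation `π ↦ π'` removing one box from each column (shifting
multiplicities down by one index). -/
def shift (b : ℕ → ℕ) : ℕ → ℕ := fun j => b (j + 1)

/-- The length `l(π) = Σ_j b_j` (number of parts). -/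
def len (D : ℕ) (b : ℕ → ℕ) : ℚ := ∑ j ∈ Icc 1 D, (b j : ℚ)

/-! ### Auxiliary lemmas -/

lemma psum_shift (D : ℕ) (b : ℕ → ℕ) (hb : ∀ j, D < j → b j = 0) (i : ℕ) :
    ∑ j ∈ Icc i D, ((shift b) j : ℚ) = ∑ j ∈ Icc (i + 1) D, (b j : ℚ) := by
  have h1 : ∑ j ∈ Icc i D, ((shift b) j : ℚ) = ∑ j ∈ Icc (i + 1) (D + 1), (b j : ℚ) := by
    rw [← Finset.map_add_right_Icc i D 1, Finset.sum_map]
    rfl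
  by_cases hiD : i ≤ D
  · rw [h1, Finset.sum_Icc_succ_top (by omega), hb (D + 1) (by omega)]
    simp
  · rw [h1, Finset.Icc_eq_empty (by omega : ¬ i + 1 ≤ D + 1),
      Finset.Icc_eq_empty (by omega : ¬ i + 1 ≤ D)]

lemma telescope_Icc (D : ℕ) (f : ℕ → ℚ) :
    ∑ i ∈ Icc 1 D, (f i - f (i + 1)) = f 1 - f (D + 1) := by
  induction D with
  | zero => simp
  | succ D ih =>
      rw [Finset.sum_Icc_succ_top (by omega), ih]
      ring

lemma Mq_sub_shift (D : ℕ) (b c : ℕ → ℕ) (hb : ∀ j, D < j → b j = 0)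
    (hc : ∀ j, D < j → c j = 0) :
    Mq D b c - Mq D (shift b) (shift c) = len D b * len D c := by
  have hM' : Mq D (shift b) (shift c) =
      ∑ i ∈ Icc 1 D, (∑ j ∈ Icc (i + 1) D, (b j : ℚ)) * (∑ j ∈ Icc (i + 1) D, (c j : ℚ)) := by
    refine Finset.sum_congr rfl fun i _ => ?_
    rw [psum_shift D b hb, psum_shift D c hc]
  rw [Mq, hM', ← Finset.sum_sub_distrib,
    telescope_Icc D (fun k => (∑ j ∈ Icc k D, (b j : ℚ)) * (∑ j ∈ Icc k D, (c j : ℚ)))]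
  have hempty : Icc (D + 1) D = (∅ : Finset ℕ) := Finset.Icc_eq_empty (by omega)
  simp [hempty, len]

lemma Mq_cross (D : ℕ) (b : ℕ → ℕ) (hb : ∀ j, D < j → b j = 0) :
    Mq D (shift b) b - Mq D b b =
      -(1/2) * (len D b)^2 - (1/2) * ∑ l ∈ Icc 1 D, (b l : ℚ)^2 := by
  set A : ℕ → ℚ := fun k => ∑ j ∈ Icc k D, (b j : ℚ) with hA
  have e1 : Mq D b b = ∑ i ∈ Icc 1 D, A i * A i := rfl
  have e2 : Mq D (shift b) b = ∑ i ∈ Icc 1 D, A (i + 1) * A i := by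
    refine Finset.sum_congr rfl fun i _ => ?_
    rw [psum_shift D b hb]
  have e3 : Mq D (shift b) (shift b) = ∑ i ∈ Icc 1 D, A (i + 1) * A (i + 1) := by
    refine Finset.sum_congr rfl fun i _ => ?_
    rw [psum_shift D b hb]
  have hstep : ∀ i ∈ Icc 1 D, A i = (b i : ℚ) + A (i + 1) := by
    intro i hi
    have hiD : i ≤ D := (Finset.mem_Icc.mp hi).2
    have hins : Icc i D = insert i (Icc (i + 1) D) := by
      ext x; simp only [Finset.mem_Icc, Finset.mem_insert]; omega
    have hnotmem : i ∉ Icc (i + 1) D := by simp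
    rw [hA]; simp only; rw [hins, Finset.sum_insert hnotmem]
  have key : Mq D b b - 2 * Mq D (shift b) b + Mq D (shift b) (shift b)
      = ∑ l ∈ Icc 1 D, (b l : ℚ)^2 := by
    rw [e1, e2, e3, Finset.mul_sum, ← Finset.sum_sub_distrib, ← Finset.sum_add_distrib]
    refine Finset.sum_congr rfl fun i hi => ?_
    rw [hstep i hi]; ring
  have key2 : Mq D b b - Mq D (shift b) (shift b) = len D b * len D b :=
    Mq_sub_shift D b b hb hb
  have : (len D b)^2 = len D b * len D b := sq (len D b)
  linarith

lemma sum_filter_mul_sum {α : Type*} [Fintype α] [DecidableEq α]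
    (q r : α → Prop) [DecidablePred q] [DecidablePred r] (x y : α → ℚ) :
    ∑ p ∈ (univ ×ˢ univ : Finset (α × α)).filter (fun p => q p.1 ∧ r p.2), x p.1 * y p.2
      = (∑ a ∈ univ.filter q, x a) * (∑ a ∈ univ.filter r, y a) := by
  rw [Finset.filter_product, Finset.sum_product, ← Finset.sum_mul_sum]

lemma sum_lt_pairs {α : Type*} [Fintype α] [DecidableEq α]
    (v : α → ℕ) (hv : Function.Injective v)
    (q : α → Prop) [DecidablePred q] (x : α → ℚ) :
    ∑ p ∈ (univ ×ˢ univ : Finset (α × α)).filter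
        (fun p => v p.1 < v p.2 ∧ q p.1 ∧ q p.2), x p.1 * x p.2
      = (1/2) * ((∑ a ∈ univ.filter q, x a)^2 - ∑ a ∈ univ.filter q, (x a)^2) := by
  set s := univ.filter q with hs
  have hset : (univ ×ˢ univ : Finset (α × α)).filter
      (fun p => v p.1 < v p.2 ∧ q p.1 ∧ q p.2)
      = (s ×ˢ s).filter (fun p => v p.1 < v p.2) := by
    ext p
    simp only [Finset.mem_filter, Finset.mem_product, hs, Finset.mem_univ, true_and]
    tauto
  have hsq : (∑ a ∈ s, x a)^2 = ∑ p ∈ s ×ˢ s, x p.1 * x p.2 := by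
    rw [sq, Finset.sum_mul_sum, Finset.sum_product]
  have hsplit1 := Finset.sum_filter_add_sum_filter_not (s ×ˢ s)
    (fun p => v p.1 < v p.2) (fun p => x p.1 * x p.2)
  have hsplit2 := Finset.sum_filter_add_sum_filter_not
    ((s ×ˢ s).filter (fun p => ¬ v p.1 < v p.2))
    (fun p => v p.2 < v p.1) (fun p => x p.1 * x p.2)
  have hgt : ((s ×ˢ s).filter (fun p => ¬ v p.1 < v p.2)).filter (fun p => v p.2 < v p.1)
      = (s ×ˢ s).filter (fun p => v p.2 < v p.1) := by
    rw [Finset.filter_filter]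
    refine Finset.filter_congr fun p _ => ?_
    constructor
    · exact fun h => h.2
    · exact fun h => ⟨by omega, h⟩
  have hdiag : ((s ×ˢ s).filter (fun p => ¬ v p.1 < v p.2)).filter (fun p => ¬ v p.2 < v p.1)
      = (s ×ˢ s).filter (fun p => p.1 = p.2) := by
    rw [Finset.filter_filter]
    refine Finset.filter_congr fun p _ => ?_
    constructor
    · intro h
      exact hv (by omega)
    · intro h
      rw [h]
      omega
  have hswap : ∑ p ∈ (s ×ˢ s).filter (fun p => v p.2 < v p.1), x p.1 * x p.2
      = ∑ p ∈ (s ×ˢ s).filter (fun p => v p.1 < v p.2), x p.1 * x p.2 := by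
    refine Finset.sum_equiv (Equiv.prodComm α α) (fun p => ?_) (fun p _ => ?_)
    · simp only [Finset.mem_filter, Finset.mem_product, Equiv.prodComm_apply, Prod.fst_swap,
        Prod.snd_swap]
      tauto
    · simp only [Equiv.prodComm_apply, Prod.fst_swap, Prod.snd_swap]
      ring
  have hdiagsum : ∑ p ∈ (s ×ˢ s).filter (fun p => p.1 = p.2), x p.1 * x p.2
      = ∑ a ∈ s, (x a)^2 := by
    refine Finset.sum_bij' (fun p _ => p.1) (fun a _ => (a, a)) ?_ ?_ ?_ ?_ ?_
    · intro p hp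
      simp only [Finset.mem_filter, Finset.mem_product] at hp
      exact hp.1.1
    · intro a ha
      simp [ha]
    · intro p hp
      simp only [Finset.mem_filter, Finset.mem_product] at hp
      exact Prod.ext rfl hp.2
    · intro a _; rfl
    · intro p hp
      simp only [Finset.mem_filter, Finset.mem_product] at hp
      rw [← hp.2, sq]
  rw [hset]
  rw [hgt, hdiag, hswap, hdiagsum] at hsplit2
  rw [← hsplit2] at hsplit1
  rw [← hsq] at hsplit1
  linarith

lemma sum_reindex_add_one {N : ℕ} [NeZero N] (g : ZMod N → ℚ) :
    ∑ a ∈ (univ : Finset (ZMod N)), g a = ∑ i ∈ (univ : Finset (ZMod N)), g (i + 1) :=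
  (Fintype.sum_equiv (Equiv.addRight (1 : ZMod N)) (fun i => g (i + 1)) g fun _ => rfl).symm

theorem T_sub_B_closed_form
    (N : ℕ) [NeZero N] (D : ℕ)
    (P : ZMod N → ZMod N → ℕ → ℕ)
    (hP : ∀ a b j, D < j → P a b j = 0)
    (I₂ : Finset (ZMod N)) :
    (∑ i ∈ I₂,
        ∑ p ∈ (univ ×ˢ univ : Finset (ZMod N × ZMod N)).filter
            (fun p => p.1 ≠ i ∧ p.2 ≠ i + 1),
          (Mq D (P (i + 1) p.1) (P p.2 i)
            - Mq D (shift (P (i + 1) p.1)) (shift (P p.2 i))))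
      + (∑ i ∈ I₂,
          ∑ p ∈ (univ ×ˢ univ : Finset (ZMod N × ZMod N)).filter
              (fun p => p.1.val < p.2.val ∧ p.1 ≠ i ∧ p.2 ≠ i),
            (Mq D (shift (P (i + 1) p.1)) (shift (P (i + 1) p.2))
              - Mq D (P (i + 1) p.1) (P (i + 1) p.2)))
      + (∑ i ∈ I₂,
          ∑ p ∈ (univ ×ˢ univ : Finset (ZMod N × ZMod N)).filter
              (fun p => p.1.val < p.2.val ∧ p.1 ≠ i + 1 ∧ p.2 ≠ i + 1),
            (Mq D (shift (P p.1 i)) (shift (P p.2 i))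
              - Mq D (P p.1 i) (P p.2 i)))
      + (∑ p ∈ (univ ×ˢ univ : Finset (ZMod N × ZMod N)).filter
            (fun p => p.1 - 1 ∈ I₂ ∧ p.2 ∈ I₂ ∧ p.2 ≠ p.1 - 1),
          (Mq D (shift (P p.1 p.2)) (shift (P p.1 p.2))
            - Mq D (P p.1 p.2) (P p.1 p.2)))
      + (∑ p ∈ (univ ×ˢ univ : Finset (ZMod N × ZMod N)).filter
            (fun p => Xor (p.1 - 1 ∈ I₂) (p.2 ∈ I₂)),
          (Mq D (shift (P p.1 p.2)) (P p.1 p.2)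
            - Mq D (P p.1 p.2) (P p.1 p.2)))
      =
      -(1 / 2 : ℚ) *
          ∑ i ∈ I₂,
            ((∑ b ∈ univ.filter (fun b : ZMod N => b ≠ i), len D (P (i + 1) b))
              - ∑ c ∈ univ.filter (fun c : ZMod N => c ≠ i + 1), len D (P c i)) ^ 2
        - (1 / 2 : ℚ) *
            ∑ p ∈ (univ ×ˢ univ : Finset (ZMod N × ZMod N)).filter
                (fun p => Xor (p.1 - 1 ∈ I₂) (p.2 ∈ I₂)),
              ∑ l ∈ Icc 1 D, (P p.1 p.2 l : ℚ) ^ 2 := by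
  classical
  set F : ZMod N → ZMod N → ℚ := fun a b => len D (P a b) with hF
  set G : ZMod N → ZMod N → ℚ := fun a b => ∑ l ∈ Icc 1 D, (P a b l : ℚ)^2 with hG
  set L : ZMod N → ℚ := fun i => ∑ b ∈ univ.filter (fun b : ZMod N => b ≠ i), F (i + 1) b
    with hL
  set R : ZMod N → ℚ := fun i => ∑ c ∈ univ.filter (fun c : ZMod N => c ≠ i + 1), F c i
    with hR
  set QL : ZMod N → ℚ := fun i => ∑ b ∈ univ.filter (fun b : ZMod N => b ≠ i), (F (i + 1) b)^2
    with hQL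
  set QR : ZMod N → ℚ := fun i => ∑ c ∈ univ.filter (fun c : ZMod N => c ≠ i + 1), (F c i)^2
    with hQR
  -- Rewrite the five blocks
  have h1 : ∀ i ∈ I₂,
      ∑ p ∈ (univ ×ˢ univ : Finset (ZMod N × ZMod N)).filter
          (fun p => p.1 ≠ i ∧ p.2 ≠ i + 1),
        (Mq D (P (i + 1) p.1) (P p.2 i)
          - Mq D (shift (P (i + 1) p.1)) (shift (P p.2 i))) = L i * R i := by
    intro i _
    rw [Finset.sum_congr rfl (fun p _ =>
      Mq_sub_shift D (P (i + 1) p.1) (P p.2 i) (hP _ _) (hP _ _))]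
    exact sum_filter_mul_sum (fun b => b ≠ i) (fun c => c ≠ i + 1)
      (fun b => F (i + 1) b) (fun c => F c i)
  have h2 : ∀ i ∈ I₂,
      ∑ p ∈ (univ ×ˢ univ : Finset (ZMod N × ZMod N)).filter
          (fun p => p.1.val < p.2.val ∧ p.1 ≠ i ∧ p.2 ≠ i),
        (Mq D (shift (P (i + 1) p.1)) (shift (P (i + 1) p.2))
          - Mq D (P (i + 1) p.1) (P (i + 1) p.2))
        = -((1/2) * ((L i)^2 - QL i)) := by
    intro i _
    have : ∀ p ∈ (univ ×ˢ univ : Finset (ZMod N × ZMod N)).filter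
        (fun p => p.1.val < p.2.val ∧ p.1 ≠ i ∧ p.2 ≠ i),
        Mq D (shift (P (i + 1) p.1)) (shift (P (i + 1) p.2))
          - Mq D (P (i + 1) p.1) (P (i + 1) p.2)
          = -(F (i + 1) p.1 * F (i + 1) p.2) := by
      intro p _
      have := Mq_sub_shift D (P (i + 1) p.1) (P (i + 1) p.2) (hP _ _) (hP _ _)
      linarith
    rw [Finset.sum_congr rfl this, Finset.sum_neg_distrib,
      sum_lt_pairs ZMod.val (ZMod.val_injective N) (fun b => b ≠ i) (fun b => F (i + 1) b)]
  have h3 : ∀ i ∈ I₂,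
      ∑ p ∈ (univ ×ˢ univ : Finset (ZMod N × ZMod N)).filter
          (fun p => p.1.val < p.2.val ∧ p.1 ≠ i + 1 ∧ p.2 ≠ i + 1),
        (Mq D (shift (P p.1 i)) (shift (P p.2 i))
          - Mq D (P p.1 i) (P p.2 i))
        = -((1/2) * ((R i)^2 - QR i)) := by
    intro i _
    have : ∀ p ∈ (univ ×ˢ univ : Finset (ZMod N × ZMod N)).filter
        (fun p => p.1.val < p.2.val ∧ p.1 ≠ i + 1 ∧ p.2 ≠ i + 1),
        Mq D (shift (P p.1 i)) (shift (P p.2 i)) - Mq D (P p.1 i) (P p.2 i)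
          = -(F p.1 i * F p.2 i) := by
      intro p _
      have := Mq_sub_shift D (P p.1 i) (P p.2 i) (hP _ _) (hP _ _)
      linarith
    rw [Finset.sum_congr rfl this, Finset.sum_neg_distrib,
      sum_lt_pairs ZMod.val (ZMod.val_injective N) (fun c => c ≠ i + 1) (fun c => F c i)]
  have h4 :
      ∑ p ∈ (univ ×ˢ univ : Finset (ZMod N × ZMod N)).filter
          (fun p => p.1 - 1 ∈ I₂ ∧ p.2 ∈ I₂ ∧ p.2 ≠ p.1 - 1),
        (Mq D (shift (P p.1 p.2)) (shift (P p.1 p.2)) - Mq D (P p.1 p.2) (P p.1 p.2))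
        = ∑ p ∈ (univ ×ˢ univ : Finset (ZMod N × ZMod N)).filter
            (fun p => p.1 - 1 ∈ I₂ ∧ p.2 ∈ I₂ ∧ p.2 ≠ p.1 - 1),
          (-(F p.1 p.2)^2) := by
    refine Finset.sum_congr rfl fun p _ => ?_
    have := Mq_sub_shift D (P p.1 p.2) (P p.1 p.2) (hP _ _) (hP _ _)
    have hsq : (F p.1 p.2)^2 = F p.1 p.2 * F p.1 p.2 := sq _
    linarith
  have h5 :
      ∑ p ∈ (univ ×ˢ univ : Finset (ZMod N × ZMod N)).filter
          (fun p => Xor (p.1 - 1 ∈ I₂) (p.2 ∈ I₂)),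
        (Mq D (shift (P p.1 p.2)) (P p.1 p.2) - Mq D (P p.1 p.2) (P p.1 p.2))
        = ∑ p ∈ (univ ×ˢ univ : Finset (ZMod N × ZMod N)).filter
            (fun p => Xor (p.1 - 1 ∈ I₂) (p.2 ∈ I₂)),
          (-(1/2) * (F p.1 p.2)^2 - (1/2) * G p.1 p.2) := by
    refine Finset.sum_congr rfl fun p _ => ?_
    exact Mq_cross D (P p.1 p.2) (hP _ _)
  rw [Finset.sum_congr rfl h1, Finset.sum_congr rfl h2, Finset.sum_congr rfl h3, h4, h5]
  -- The key combinatorial identity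
  have hiff : ∀ a b : ZMod N, a = b + 1 ↔ b = a - 1 := by
    intro a b
    constructor
    · intro h; rw [h]; ring
    · intro h; rw [h]; ring
  have main :
      (∑ i ∈ I₂, QL i) + (∑ i ∈ I₂, QR i)
        = 2 * (∑ p ∈ (univ ×ˢ univ : Finset (ZMod N × ZMod N)).filter
              (fun p => p.1 - 1 ∈ I₂ ∧ p.2 ∈ I₂ ∧ p.2 ≠ p.1 - 1), (F p.1 p.2)^2)
          + ∑ p ∈ (univ ×ˢ univ : Finset (ZMod N × ZMod N)).filter
              (fun p => Xor (p.1 - 1 ∈ I₂) (p.2 ∈ I₂)), (F p.1 p.2)^2 := by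
    have eA : ∑ i ∈ I₂, QL i
        = ∑ a ∈ (univ : Finset (ZMod N)), ∑ b ∈ (univ : Finset (ZMod N)),
            (if a - 1 ∈ I₂ ∧ b ≠ a - 1 then (F a b)^2 else 0) := by
      rw [sum_reindex_add_one (fun a => ∑ b ∈ (univ : Finset (ZMod N)),
        (if a - 1 ∈ I₂ ∧ b ≠ a - 1 then (F a b)^2 else 0))]
      simp only [add_sub_cancel_right]
      rw [show ∑ i ∈ I₂, QL i = ∑ i ∈ (univ : Finset (ZMod N)), if i ∈ I₂ then QL i else 0
        from by rw [Finset.sum_ite_mem, Finset.univ_inter]]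
      refine Finset.sum_congr rfl fun i _ => ?_
      by_cases hi : i ∈ I₂
      · simp only [hi, if_true, true_and, hQL, Finset.sum_filter]
      · simp [hi]
    have eB : ∑ i ∈ I₂, QR i
        = ∑ a ∈ (univ : Finset (ZMod N)), ∑ b ∈ (univ : Finset (ZMod N)),
            (if b ∈ I₂ ∧ a ≠ b + 1 then (F a b)^2 else 0) := by
      rw [Finset.sum_comm]
      rw [show ∑ i ∈ I₂, QR i = ∑ i ∈ (univ : Finset (ZMod N)), if i ∈ I₂ then QR i else 0
        from by rw [Finset.sum_ite_mem, Finset.univ_inter]]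
      refine Finset.sum_congr rfl fun i _ => ?_
      by_cases hi : i ∈ I₂
      · simp only [hi, if_true, true_and, hQR, Finset.sum_filter]
      · simp [hi]
    have eC : ∑ p ∈ (univ ×ˢ univ : Finset (ZMod N × ZMod N)).filter
          (fun p => p.1 - 1 ∈ I₂ ∧ p.2 ∈ I₂ ∧ p.2 ≠ p.1 - 1), (F p.1 p.2)^2
        = ∑ a ∈ (univ : Finset (ZMod N)), ∑ b ∈ (univ : Finset (ZMod N)),
            (if a - 1 ∈ I₂ ∧ b ∈ I₂ ∧ b ≠ a - 1 then (F a b)^2 else 0) := by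
      rw [Finset.sum_filter, Finset.sum_product]
    have eD : ∑ p ∈ (univ ×ˢ univ : Finset (ZMod N × ZMod N)).filter
          (fun p => Xor (p.1 - 1 ∈ I₂) (p.2 ∈ I₂)), (F p.1 p.2)^2
        = ∑ a ∈ (univ : Finset (ZMod N)), ∑ b ∈ (univ : Finset (ZMod N)),
            (if Xor (a - 1 ∈ I₂) (b ∈ I₂) then (F a b)^2 else 0) := by
      rw [Finset.sum_filter, Finset.sum_product]
    rw [eA, eB, eC, eD, Finset.mul_sum, ← Finset.sum_add_distrib, ← Finset.sum_add_distrib]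
    refine Finset.sum_congr rfl fun a _ => ?_
    rw [Finset.mul_sum, ← Finset.sum_add_distrib, ← Finset.sum_add_distrib]
    refine Finset.sum_congr rfl fun b _ => ?_
    have hne : (a ≠ b + 1) ↔ (b ≠ a - 1) := not_congr (hiff a b)
    by_cases hab : b = a - 1
    · subst hab
      have ha1 : a = a - 1 + 1 := by ring
      simp [Xor, ← ha1]
    · have hab' : a ≠ b + 1 := hne.mpr hab
      by_cases hA : a - 1 ∈ I₂ <;> by_cases hB : b ∈ I₂ <;>
        simp [Xor, hA, hB, hab, hab'] <;> ring
  -- Final algebraic assembly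
  have expand1 : ∑ i ∈ I₂, L i * R i
        + ∑ i ∈ I₂, -((1/2) * ((L i)^2 - QL i))
        + ∑ i ∈ I₂, -((1/2) * ((R i)^2 - QR i))
      = ∑ i ∈ I₂, (-(1/2) * (L i - R i)^2)
        + (1/2) * (∑ i ∈ I₂, QL i) + (1/2) * (∑ i ∈ I₂, QR i) := by
    rw [Finset.mul_sum, Finset.mul_sum, ← Finset.sum_add_distrib, ← Finset.sum_add_distrib,
      ← Finset.sum_add_distrib, ← Finset.sum_add_distrib]
    exact Finset.sum_congr rfl fun i _ => by ring
  have expand2 : ∑ p ∈ (univ ×ˢ univ : Finset (ZMod N × ZMod N)).filter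
        (fun p => Xor (p.1 - 1 ∈ I₂) (p.2 ∈ I₂)),
        (-(1/2) * (F p.1 p.2)^2 - (1/2) * G p.1 p.2)
      = -(1/2) * (∑ p ∈ (univ ×ˢ univ : Finset (ZMod N × ZMod N)).filter
            (fun p => Xor (p.1 - 1 ∈ I₂) (p.2 ∈ I₂)), (F p.1 p.2)^2)
        - (1/2) * (∑ p ∈ (univ ×ˢ univ : Finset (ZMod N × ZMod N)).filter
            (fun p => Xor (p.1 - 1 ∈ I₂) (p.2 ∈ I₂)), G p.1 p.2) := by
    rw [Finset.mul_sum, Finset.mul_sum, ← Finset.sum_sub_distrib]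
  have expand3 : ∑ p ∈ (univ ×ˢ univ : Finset (ZMod N × ZMod N)).filter
        (fun p => p.1 - 1 ∈ I₂ ∧ p.2 ∈ I₂ ∧ p.2 ≠ p.1 - 1), (-(F p.1 p.2)^2)
      = -(∑ p ∈ (univ ×ˢ univ : Finset (ZMod N × ZMod N)).filter
          (fun p => p.1 - 1 ∈ I₂ ∧ p.2 ∈ I₂ ∧ p.2 ≠ p.1 - 1), (F p.1 p.2)^2) := by
    rw [Finset.sum_neg_distrib]
  have hRHS1 : -(1 / 2 : ℚ) *
      ∑ i ∈ I₂, ((∑ b ∈ univ.filter (fun b : ZMod N => b ≠ i), len D (P (i + 1) b))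
        - ∑ c ∈ univ.filter (fun c : ZMod N => c ≠ i + 1), len D (P c i)) ^ 2
      = ∑ i ∈ I₂, (-(1/2) * (L i - R i)^2) := by
    rw [Finset.mul_sum]
  have hRHS2 : ∑ p ∈ (univ ×ˢ univ : Finset (ZMod N × ZMod N)).filter
        (fun p => Xor (p.1 - 1 ∈ I₂) (p.2 ∈ I₂)),
        ∑ l ∈ Icc 1 D, (P p.1 p.2 l : ℚ) ^ 2
      = ∑ p ∈ (univ ×ˢ univ : Finset (ZMod N × ZMod N)).filter
          (fun p => Xor (p.1 - 1 ∈ I₂) (p.2 ∈ I₂)), G p.1 p.2 := rfl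
  rw [hRHS2]
  rw [expand2, expand3]
  rw [expand1, hRHS1]
  linarith [main]

end Stmt19
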